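/- arXiv:2509.22184 — 5 statements merged into one kernel-verified Lean document; each statement's English description precedes it below -/
import Mathlib

section
/- Let D = diag(d_1,…,d_{k-1},0,…,0) be an n×n diagonal matrix with d_1,…,d_{k-1} > 0 and k ≥ 2, and let y = a e_1 + b e_k for scalars a, b with a ≠ 0. Then the matrix A = E_{1,1} + d_1 a b E_{k,1} − d_1 a^2 E_{k,k} + Σ_{i≠1,k} E_{i,i} satisfies A^T D A = D and A y = a e_1. -/
open Matrix

lemma sum_std_apply (n : ℕ) [NeZero n] (k : Fin n) (p q : Fin n) :
    (∑ i ∈ Finset.univ.filter (fun i : Fin n => i ≠ 0 ∧ i ≠ k),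
      Matrix.single i i (1:ℝ)) p q
    = if p = q ∧ p ≠ 0 ∧ p ≠ k then 1 else 0 := by
  rw [Matrix.sum_apply]
  by_cases hpq : p = q
  · subst hpq
    simp [Matrix.single, Finset.sum_ite_eq', eq_comm]
  · rw [Finset.sum_eq_zero, if_neg (by tauto)]
    intro i _
    simp only [Matrix.single, Matrix.of_apply]
    rw [if_neg]
    rintro ⟨rfl, rfl⟩; exact hpq rfl

lemma A_apply (n : ℕ) [NeZero n] (k : Fin n) (d : Fin n → ℝ) (a b : ℝ)
    (A : Matrix (Fin n) (Fin n) ℝ)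
    (hA : A = Matrix.single 0 0 1
        + (d 0 * a * b) • Matrix.single k 0 1
        - (d 0 * a ^ 2) • Matrix.single k k 1
        + ∑ i ∈ Finset.univ.filter (fun i : Fin n => i ≠ 0 ∧ i ≠ k),
            Matrix.single i i 1) (hk : k ≠ 0) :
    ∀ p q, A p q = if p = 0 ∧ q = 0 then 1 else if p = k ∧ q = 0 then d 0 * a * b
      else if p = k ∧ q = k then -(d 0 * a^2) else if p = q then 1 else 0 := by
  intro p q
  subst hA
  simp only [Matrix.add_apply, Matrix.sub_apply, Matrix.smul_apply, smul_eq_mul,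
    sum_std_apply]
  simp only [Matrix.single, Matrix.of_apply]
  by_cases hp0 : p = 0 <;> by_cases hq0 : q = 0 <;> by_cases hpk : p = k <;>
    by_cases hqk : q = k <;> by_cases hpq : p = q <;>
    simp_all [eq_comm]

theorem psd_canonical_alignment (n : ℕ) [NeZero n]
    (k : Fin n) (hk : k ≠ 0)
    (d : Fin n → ℝ) (hdpos : ∀ i : Fin n, i < k → 0 < d i)
    (hdzero : ∀ i : Fin n, k ≤ i → d i = 0)
    (D : Matrix (Fin n) (Fin n) ℝ) (hD : D = Matrix.diagonal d)
    (a b : ℝ) (ha : a ≠ 0)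
    (y : Fin n → ℝ)
    (hy : y = a • ((Pi.single 0 1 : Fin n → ℝ)) + b • ((Pi.single k 1 : Fin n → ℝ)))
    (A : Matrix (Fin n) (Fin n) ℝ)
    (hA : A = Matrix.single 0 0 1
        + (d 0 * a * b) • Matrix.single k 0 1
        - (d 0 * a ^ 2) • Matrix.single k k 1
        + ∑ i ∈ Finset.univ.filter (fun i : Fin n => i ≠ 0 ∧ i ≠ k),
            Matrix.single i i 1) :
    Aᵀ * D * A = D ∧ A.mulVec y = a • ((Pi.single 0 1 : Fin n → ℝ)) := by
  have hA' := A_apply n k d a b A hA hk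
  have hdk : d k = 0 := hdzero k le_rfl
  subst hD hy
  constructor
  · ext i j
    rw [Matrix.mul_apply]
    simp only [Matrix.mul_diagonal, Matrix.transpose_apply]
    rw [Finset.sum_eq_single i]
    · rw [hA' i i, hA' i j, Matrix.diagonal_apply]
      clear hA hA' hdpos hdzero ha
      by_cases hi0 : i = 0 <;> by_cases hik : i = k <;> by_cases hij : i = j <;>
        by_cases hjk : j = k <;> by_cases hj0 : j = 0 <;>
        simp_all [eq_comm] <;> ring
    · intro q _ hqi
      by_cases hqk : q = k
      · rw [hqk, hdk]; ring
      · rw [hA' q i]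
        clear hA hA' hdpos hdzero ha
        split_ifs with h1 h2 h3 h4 <;> simp_all
    · intro h; exact absurd (Finset.mem_univ i) h
  · funext i
    rw [Matrix.mulVec, dotProduct]
    simp only [Pi.add_apply, Pi.smul_apply, smul_eq_mul, Pi.single_apply, mul_ite,
      mul_one, mul_zero, mul_add, Finset.sum_add_distrib, Finset.sum_ite_eq',
      Finset.mem_univ, if_true]
    rw [hA' i 0, hA' i k]
    clear hA hA' hdpos hdzero
    by_cases hi0 : i = 0 <;> by_cases hik : i = k <;>
      simp_all [eq_comm] <;> ring
end

section
/- Let D = d_1 E_{1,1} − d_k E_{k,k} + (other terms), specifically D diagonal with D_{11} = d_1 > 0 and D_{kk} = −d_k < 0, and let x = a e_1 + b e_k with x^T D x = d_1 a^2 − d_k b^2 > 0. Then there exists an invertible matrix M with M^T D M = D and M x = α e_1, where α = √((d_1 a^2 − d_k b^2)/d_1). -/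
open Matrix Finset

def pl {n : ℕ} [NeZero n] (k : Fin n) (p q r s : ℝ) : Matrix (Fin n) (Fin n) ℝ :=
  Matrix.of fun i j =>
    if i = 0 then (if j = 0 then p else if j = k then q else 0)
    else if i = k then (if j = 0 then r else if j = k then s else 0)
    else if i = j then 1 else 0

lemma sum_split {n : ℕ} [NeZero n] (k : Fin n) (hk : k ≠ 0) (f : Fin n → ℝ)
    (hf : ∀ m, m ≠ 0 → m ≠ k → f m = 0) :
    ∑ m, f m = f 0 + f k := by
  have hsub : ({0, k} : Finset (Fin n)) ⊆ univ := subset_univ _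
  rw [← Finset.sum_subset hsub, Finset.sum_pair (Ne.symm hk)]
  intro m _ hm
  simp only [Finset.mem_insert, Finset.mem_singleton, not_or] at hm
  exact hf m hm.1 hm.2

lemma pl_conj_diag {n : ℕ} [NeZero n] (k : Fin n) (hk : k ≠ 0) (d : Fin n → ℝ)
    (p q r s : ℝ)
    (h1 : p * (d 0 * p) + r * (d k * r) = d 0)
    (h2 : q * (d 0 * q) + s * (d k * s) = d k)
    (h3 : p * (d 0 * q) + r * (d k * s) = 0) :
    (pl k p q r s)ᵀ * Matrix.diagonal d * pl k p q r s = Matrix.diagonal d := by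
  rw [Matrix.mul_assoc]
  ext i j
  rw [Matrix.mul_apply]
  simp only [transpose_apply, Matrix.mul_apply, Matrix.diagonal_apply, ite_mul, zero_mul,
    Finset.sum_ite_eq, Finset.mem_univ, if_true]
  by_cases hi0 : i = 0
  · subst hi0
    rw [sum_split k hk]
    · by_cases hj0 : j = 0
      · subst hj0; simpa [pl, hk] using h1
      · by_cases hjk : j = k
        · subst hjk
          simp only [pl, Matrix.of_apply, if_pos rfl, if_neg hk, if_neg (Ne.symm hk)]
          simp only [↓reduceIte, if_neg (Ne.symm hk)]
          linear_combination h3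
        · simp [pl, hk, hj0, hjk, Ne.symm hj0]
    · intro m hm0 hmk
      simp [pl, hm0, hmk]
  · by_cases hik : i = k
    · subst hik
      rw [sum_split i hk]
      · by_cases hj0 : j = 0
        · subst hj0
          simp only [pl, Matrix.of_apply, if_pos rfl, if_neg hk, if_neg (Ne.symm hk)]
          simp only [↓reduceIte, if_neg hk]
          linear_combination h3
        · by_cases hjk : j = i
          · subst hjk; simpa [pl, hk, Ne.symm hk] using h2
          · simp [pl, hk, hj0, hjk, Ne.symm hjk]
      · intro m hm0 hmk
        simp [pl, hm0, hmk]
    · rw [Finset.sum_eq_single i]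
      · by_cases hij : i = j
        · subst hij; simp [pl, hi0, hik]
        · simp [pl, hi0, hik, hij]
      · intro m _ hmi
        by_cases hm0 : m = 0
        · subst hm0; simp [pl, hi0, hik]
        · by_cases hmk : m = k
          · subst hmk; simp [pl, hi0, hik]
          · simp [pl, hm0, hmk, hmi, Ne.symm hmi]
      · intro h; exact absurd (Finset.mem_univ i) h

lemma pl_mul {n : ℕ} [NeZero n] (k : Fin n) (hk : k ≠ 0) (p q r s p' q' r' s' : ℝ) :
    pl k p q r s * pl k p' q' r' s' =
      pl k (p*p'+q*r') (p*q'+q*s') (r*p'+s*r') (r*q'+s*s') := by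
  ext i j
  rw [Matrix.mul_apply]
  by_cases hi0 : i = 0
  · subst hi0
    rw [sum_split k hk]
    · by_cases hj0 : j = 0
      · subst hj0; simp [pl, hk]
      · by_cases hjk : j = k
        · subst hjk; simp [pl, hk, Ne.symm hk]
        · simp [pl, hk, hj0, hjk]
    · intro m hm0 hmk
      simp [pl, hm0, hmk]
  · by_cases hik : i = k
    · subst hik
      rw [sum_split i hk]
      · by_cases hj0 : j = 0
        · subst hj0; simp [pl, hk]
        · by_cases hjk : j = i
          · subst hjk; simp [pl, hk, Ne.symm hk]
          · simp [pl, hk, hj0, hjk]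
      · intro m hm0 hmk
        simp [pl, hm0, hmk, hk]
    · rw [Finset.sum_eq_single i]
      · simp [pl, hi0, hik]
      · intro m _ hmi
        by_cases hm0 : m = 0
        · subst hm0; simp [pl, hi0, hik, Ne.symm hmi]
        · by_cases hmk : m = k
          · subst hmk; simp [pl, hi0, hik, Ne.symm hmi]
          · simp [pl, hi0, hik, hm0, hmk, hmi, Ne.symm hmi]
      · intro h; exact absurd (Finset.mem_univ i) h

lemma pl_one {n : ℕ} [NeZero n] (k : Fin n) (hk : k ≠ 0) :
    pl k 1 0 0 1 = (1 : Matrix (Fin n) (Fin n) ℝ) := by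
  ext i j
  by_cases hi0 : i = 0
  · subst hi0
    by_cases hj0 : j = 0
    · subst hj0; simp [pl]
    · simp [pl, hj0, Ne.symm hj0, Matrix.one_apply]
  · by_cases hik : i = k
    · subst hik
      by_cases hjk : j = i
      · subst hjk; simp [pl, hk]
      · simp [pl, hk, hjk, Ne.symm hjk, Matrix.one_apply]
    · simp [pl, hi0, hik, Matrix.one_apply]

lemma pl_transpose {n : ℕ} [NeZero n] (k : Fin n) (hk : k ≠ 0) (p q r s : ℝ) :
    (pl k p q r s)ᵀ = pl k p r q s := by
  ext i j
  by_cases hi0 : i = 0 <;> by_cases hik : i = k <;>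
    by_cases hj0 : j = 0 <;> by_cases hjk : j = k <;>
    simp_all [pl, transpose_apply, hk, Ne.symm hk, eq_comm]

lemma pl_mulVec {n : ℕ} [NeZero n] (k : Fin n) (hk : k ≠ 0) (p q r s : ℝ)
    (x : Fin n → ℝ) (hx : ∀ m, m ≠ 0 → m ≠ k → x m = 0) :
    (pl k p q r s).mulVec x =
      fun i => if i = 0 then p * x 0 + q * x k
        else if i = k then r * x 0 + s * x k else 0 := by
  funext i
  rw [Matrix.mulVec, dotProduct]
  by_cases hi0 : i = 0
  · subst hi0
    rw [sum_split k hk]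
    · simp [pl, hk]
    · intro m hm0 hmk; simp [pl, hm0, hmk]
  · by_cases hik : i = k
    · subst hik
      rw [sum_split i hk]
      · simp [pl, hk]
      · intro m hm0 hmk; simp [pl, hm0, hmk, hk]
    · rw [Finset.sum_eq_single i]
      · simp [pl, hi0, hik, hx i hi0 hik]
      · intro m _ hmi
        by_cases hm0 : m = 0
        · subst hm0; simp [pl, hi0, hik, Ne.symm hmi]
        · by_cases hmk : m = k
          · subst hmk; simp [pl, hi0, hik, Ne.symm hmi]
          · simp [pl, hi0, hik, hm0, hmk, hmi, Ne.symm hmi, hx m hm0 hmk]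
      · intro h; exact absurd (Finset.mem_univ i) h

theorem indefinite_canonical_alignment (n : ℕ) [NeZero n]
    (k : Fin n) (hk : k ≠ 0)
    (d₁ dk : ℝ) (hd₁ : 0 < d₁) (hdk : 0 < dk)
    (D : Matrix (Fin n) (Fin n) ℝ) (hD : D.IsDiag)
    (hD1 : D 0 0 = d₁) (hDk : D k k = -dk)
    (a b : ℝ)
    (x : Fin n → ℝ)
    (hx : x = a • ((Pi.single 0 1 : Fin n → ℝ)) + b • ((Pi.single k 1 : Fin n → ℝ)))
    (hpos : d₁ * a ^ 2 - dk * b ^ 2 > 0) :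
    ∃ M : Matrix (Fin n) (Fin n) ℝ,
      IsUnit M ∧ Mᵀ * D * M = D ∧
      M.mulVec x = Real.sqrt ((d₁ * a ^ 2 - dk * b ^ 2) / d₁)
          • ((Pi.single 0 1 : Fin n → ℝ)) := by
  set β := Real.sqrt (d₁ * a ^ 2 - dk * b ^ 2) with hβdef
  set sd := Real.sqrt d₁ with hsddef
  have hβpos : 0 < β := Real.sqrt_pos.mpr hpos
  have hβsq : β ^ 2 = d₁ * a ^ 2 - dk * b ^ 2 := Real.sq_sqrt hpos.le
  have hsdpos : 0 < sd := Real.sqrt_pos.mpr hd₁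
  have hsdsq : sd ^ 2 = d₁ := Real.sq_sqrt hd₁.le
  have hβne : β ≠ 0 := hβpos.ne'
  have hsdne : sd ≠ 0 := hsdpos.ne'
  set p : ℝ := sd * a / β with hp
  set q : ℝ := -(dk * b) / (sd * β) with hq
  set r : ℝ := -(sd * b) / β with hr
  -- values of x
  have hx0 : x 0 = a := by
    rw [hx]; simp [Pi.single_eq_of_ne (Ne.symm hk)]
  have hxk : x k = b := by
    rw [hx]; simp [Pi.single_eq_of_ne hk]
  have hxo : ∀ m, m ≠ 0 → m ≠ k → x m = 0 := by
    intro m hm0 hmk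
    rw [hx]; simp [Pi.single_eq_of_ne hm0, Pi.single_eq_of_ne hmk]
  -- D is diagonal
  have hDdiag : D = Matrix.diagonal (D.diag) := (hD.diagonal_diag).symm
  refine ⟨pl k p q r p, ?_, ?_, ?_⟩
  · -- IsUnit
    refine ⟨⟨pl k p q r p, pl k p (-q) (-r) p, ?_, ?_⟩, rfl⟩
    · rw [pl_mul k hk]
      rw [show p*p+q*(-r) = 1 by
        rw [hp, hq, hr]; field_simp; linear_combination a^2 * hsdsq - hβsq]
      rw [show p*(-q)+q*p = 0 by ring, show r*p+p*(-r) = 0 by ring,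
        show r*(-q)+p*p = 1 by
          rw [hp, hq, hr]; field_simp; linear_combination a^2 * hsdsq - hβsq]
      exact pl_one k hk
    · rw [pl_mul k hk]
      rw [show p*p+(-q)*r = 1 by
        rw [hp, hq, hr]; field_simp; linear_combination a^2 * hsdsq - hβsq]
      rw [show p*q+(-q)*p = 0 by ring, show (-r)*p+p*r = 0 by ring,
        show (-r)*q+p*p = 1 by
          rw [hp, hq, hr]; field_simp; linear_combination a^2 * hsdsq - hβsq]
      exact pl_one k hk
  · -- preserves D
    rw [hDdiag]
    apply pl_conj_diag k hk
    · simp only [Matrix.diag_apply, hD1, hDk]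
      rw [hp, hr]; field_simp
      linear_combination (d₁*a^2 - dk*b^2) * hsdsq - d₁ * hβsq
    · simp only [Matrix.diag_apply, hD1, hDk]
      rw [hp, hq]; field_simp
      linear_combination (β^2 - a^2*(sd^2+d₁)) * hsdsq + d₁ * hβsq
    · simp only [Matrix.diag_apply, hD1, hDk]
      rw [hp, hq, hr]; field_simp
      linear_combination (a*dk*b) * hsdsq
  · -- moves x to the right place
    rw [pl_mulVec k hk p q r p x hxo, hx0, hxk]
    have hα : Real.sqrt ((d₁ * a ^ 2 - dk * b ^ 2) / d₁) = β / sd := by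
      rw [Real.sqrt_div hpos.le]
    rw [hα]
    funext i
    by_cases hi0 : i = 0
    · subst hi0
      simp only [if_pos rfl, if_true, Pi.smul_apply, Pi.single_eq_same, smul_eq_mul, mul_one]
      rw [hp, hq]; field_simp
      linear_combination a^2 * hsdsq - hβsq
    · by_cases hik : i = k
      · subst hik
        simp only [if_neg hk, if_pos rfl, Pi.smul_apply,
          Pi.single_eq_of_ne hk, smul_eq_mul, mul_zero, if_true]
        rw [hp, hr]; field_simp; ring
      · simp [hi0, hik, Pi.single_eq_of_ne hi0]
end

section
/- Let A be a nonzero symmetric n×n real matrix and G = {U ∈ GL(n,R) : U^T A U = A}. If x, y ∈ R^n satisfy x^T A x = y^T A y ≠ 0, then there exists g ∈ G with g x = y. Consequently, the G-orbits on {x : x^T A x ≠ 0} are exactly the nonempty level sets {x : x^T A x = c} for c ≠ 0. -/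
open Matrix

section Aux

variable {n : ℕ} (A : Matrix (Fin n) (Fin n) ℝ)

lemma aux_Bsymm (hA : A.IsSymm) (u w : Fin n → ℝ) :
    u ⬝ᵥ A *ᵥ w = w ⬝ᵥ A *ᵥ u := by
  rw [dotProduct_mulVec, ← mulVec_transpose, hA.eq, dotProduct_comm]

lemma aux_ext_mulVec {M N : Matrix (Fin n) (Fin n) ℝ}
    (h : ∀ u, M *ᵥ u = N *ᵥ u) : M = N := by
  ext i j
  have := congrFun (h (Pi.single j 1)) i
  simpa [mulVec_single] using this

lemma aux_ext_bilin {M N : Matrix (Fin n) (Fin n) ℝ}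
    (h : ∀ u w, u ⬝ᵥ M *ᵥ w = u ⬝ᵥ N *ᵥ w) : M = N := by
  ext i j
  have := h (Pi.single i 1) (Pi.single j 1)
  simpa [mulVec_single, single_dotProduct] using this

lemma aux_pull (g : Matrix (Fin n) (Fin n) ℝ) (u w : Fin n → ℝ) :
    (g *ᵥ u) ⬝ᵥ A *ᵥ (g *ᵥ w) = u ⬝ᵥ (gᵀ * A * g) *ᵥ w := by
  rw [← mulVec_mulVec, ← mulVec_mulVec, dotProduct_mulVec (v := u),
    ← mulVec_transpose, transpose_transpose, dotProduct_mulVec (v := g *ᵥ u)]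

lemma aux_vecMulVec_mulVec (v w u : Fin n → ℝ) :
    (vecMulVec v w) *ᵥ u = (w ⬝ᵥ u) • v := by
  ext i
  simp only [vecMulVec, mulVec, dotProduct, Pi.smul_apply, smul_eq_mul,
    Finset.sum_mul, of_apply]
  apply Finset.sum_congr rfl
  intros
  ring

/-- The reflection in a vector `v` with `Q v ≠ 0`. -/
noncomputable def myRefl (v : Fin n → ℝ) : Matrix (Fin n) (Fin n) ℝ :=
  1 - (2 / (v ⬝ᵥ A *ᵥ v)) • vecMulVec v (A *ᵥ v)

lemma myRefl_mulVec (hA : A.IsSymm) (v : Fin n → ℝ) (u : Fin n → ℝ) :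
    (myRefl A v) *ᵥ u = u - (2 * (v ⬝ᵥ A *ᵥ u) / (v ⬝ᵥ A *ᵥ v)) • v := by
  rw [myRefl, sub_mulVec, one_mulVec, smul_mulVec, aux_vecMulVec_mulVec]
  have h1 : (A *ᵥ v) ⬝ᵥ u = v ⬝ᵥ A *ᵥ u := by
    rw [dotProduct_comm, aux_Bsymm A hA]
  rw [h1, smul_smul]
  ring_nf

lemma myRefl_isom (hA : A.IsSymm) (v : Fin n → ℝ) (hv : v ⬝ᵥ A *ᵥ v ≠ 0)
    (u w : Fin n → ℝ) :
    ((myRefl A v) *ᵥ u) ⬝ᵥ A *ᵥ ((myRefl A v) *ᵥ w) = u ⬝ᵥ A *ᵥ w := by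
  rw [myRefl_mulVec A hA, myRefl_mulVec A hA]
  have hsym : v ⬝ᵥ A *ᵥ u = u ⬝ᵥ A *ᵥ v := aux_Bsymm A hA v u
  have hsym2 : v ⬝ᵥ A *ᵥ w = w ⬝ᵥ A *ᵥ v := aux_Bsymm A hA v w
  simp only [mulVec_sub, mulVec_smul, dotProduct_sub, sub_dotProduct,
    dotProduct_smul, smul_dotProduct, smul_eq_mul]
  rw [hsym, hsym2]
  field_simp
  ring

lemma myRefl_sq (hA : A.IsSymm) (v : Fin n → ℝ) (hv : v ⬝ᵥ A *ᵥ v ≠ 0) :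
    myRefl A v * myRefl A v = 1 := by
  apply aux_ext_mulVec
  intro u
  rw [← mulVec_mulVec, myRefl_mulVec A hA, myRefl_mulVec A hA, one_mulVec]
  rw [mulVec_sub, mulVec_smul, dotProduct_sub, dotProduct_smul]
  have h1 : v ⬝ᵥ A *ᵥ u - (2 * (v ⬝ᵥ A *ᵥ u) / (v ⬝ᵥ A *ᵥ v)) • (v ⬝ᵥ A *ᵥ v)
      = -(v ⬝ᵥ A *ᵥ u) := by
    rw [smul_eq_mul]
    field_simp
    ring
  rw [h1]
  have h2 : 2 * -(v ⬝ᵥ A *ᵥ u) / (v ⬝ᵥ A *ᵥ v)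
      = -(2 * (v ⬝ᵥ A *ᵥ u) / (v ⬝ᵥ A *ᵥ v)) := by ring
  rw [h2, neg_smul, sub_neg_eq_add, sub_add_cancel]

lemma myRefl_form (hA : A.IsSymm) (v : Fin n → ℝ) (hv : v ⬝ᵥ A *ᵥ v ≠ 0) :
    (myRefl A v)ᵀ * A * myRefl A v = A := by
  apply aux_ext_bilin
  intro u w
  rw [← aux_pull]
  exact myRefl_isom A hA v hv u w

end Aux

theorem orbit_space_quadratic_form (n : ℕ)
    (A : Matrix (Fin n) (Fin n) ℝ) (hA0 : A ≠ 0) (hA : A.IsSymm) :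
    (∀ x y : Fin n → ℝ, x ⬝ᵥ A.mulVec x = y ⬝ᵥ A.mulVec y →
        x ⬝ᵥ A.mulVec x ≠ 0 →
        ∃ g : Matrix (Fin n) (Fin n) ℝ,
          IsUnit g ∧ gᵀ * A * g = A ∧ g.mulVec x = y) ∧
    (∀ x : Fin n → ℝ, x ⬝ᵥ A.mulVec x ≠ 0 →
      {y : Fin n → ℝ | ∃ g : Matrix (Fin n) (Fin n) ℝ,
          IsUnit g ∧ gᵀ * A * g = A ∧ g.mulVec x = y}
        = {y : Fin n → ℝ | y ⬝ᵥ A.mulVec y = x ⬝ᵥ A.mulVec x}) := by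
  have hsymB := aux_Bsymm A hA
  have part1 : ∀ x y : Fin n → ℝ, x ⬝ᵥ A.mulVec x = y ⬝ᵥ A.mulVec y →
      x ⬝ᵥ A.mulVec x ≠ 0 →
      ∃ g : Matrix (Fin n) (Fin n) ℝ,
        IsUnit g ∧ gᵀ * A * g = A ∧ g.mulVec x = y := by
    intro x y hxy hx
    have hBxy : y ⬝ᵥ A *ᵥ x = x ⬝ᵥ A *ᵥ y := hsymB y x
    have hQm : (x - y) ⬝ᵥ A *ᵥ (x - y)
        = 2 * (x ⬝ᵥ A *ᵥ x) - 2 * (x ⬝ᵥ A *ᵥ y) := by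
      rw [mulVec_sub, dotProduct_sub, sub_dotProduct, sub_dotProduct, hBxy, ← hxy]
      ring
    have hQp : (x + y) ⬝ᵥ A *ᵥ (x + y)
        = 2 * (x ⬝ᵥ A *ᵥ x) + 2 * (x ⬝ᵥ A *ᵥ y) := by
      rw [mulVec_add, dotProduct_add, add_dotProduct, add_dotProduct, hBxy, ← hxy]
      ring
    by_cases hm : (x - y) ⬝ᵥ A *ᵥ (x - y) = 0
    · -- use -reflection in x + y
      have hBc : x ⬝ᵥ A *ᵥ y = x ⬝ᵥ A *ᵥ x := by
        rw [hm] at hQm; linarith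
      have hp : (x + y) ⬝ᵥ A *ᵥ (x + y) ≠ 0 := by
        rw [hQp, hBc]
        intro h; exact hx (by linarith)
      refine ⟨-(myRefl A (x + y)), ?_, ?_, ?_⟩
      · have h := myRefl_sq A hA _ hp
        have hu : IsUnit (myRefl A (x + y)) := ⟨⟨myRefl A (x + y), myRefl A (x + y), h, h⟩, rfl⟩
        exact hu.neg
      · simp only [transpose_neg, neg_mul, mul_neg, neg_neg]
        exact myRefl_form A hA _ hp
      · rw [neg_mulVec, myRefl_mulVec A hA]
        have hcoef : 2 * ((x + y) ⬝ᵥ A *ᵥ x) / ((x + y) ⬝ᵥ A *ᵥ (x + y)) = 1 := by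
          have h1 : (x + y) ⬝ᵥ A *ᵥ x = x ⬝ᵥ A *ᵥ x + x ⬝ᵥ A *ᵥ y := by
            rw [add_dotProduct, hsymB y x]
          rw [div_eq_one_iff_eq hp, h1, hQp]
          ring
        rw [hcoef, one_smul]
        abel
    · -- use reflection in x - y
      refine ⟨myRefl A (x - y), ?_, myRefl_form A hA _ hm, ?_⟩
      · have h := myRefl_sq A hA _ hm
        exact ⟨⟨myRefl A (x - y), myRefl A (x - y), h, h⟩, rfl⟩
      · rw [myRefl_mulVec A hA]
        have hcoef : 2 * ((x - y) ⬝ᵥ A *ᵥ x) / ((x - y) ⬝ᵥ A *ᵥ (x - y)) = 1 := by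
          have h1 : (x - y) ⬝ᵥ A *ᵥ x = x ⬝ᵥ A *ᵥ x - x ⬝ᵥ A *ᵥ y := by
            rw [sub_dotProduct, hsymB y x]
          rw [div_eq_one_iff_eq hm, h1, hQm]
          ring
        rw [hcoef, one_smul]
        abel
  refine ⟨part1, ?_⟩
  intro x hx
  ext y
  simp only [Set.mem_setOf_eq]
  constructor
  · rintro ⟨g, hg, hform, rfl⟩
    rw [aux_pull A g x x, hform]
  · intro hy
    exact part1 x y hy.symm hx
end

section
/- Let A be a nonzero symmetric n×n matrix with G = {U ∈ GL(n,R) : U^T A U = A}, and let f : R^n \ {x : x^T A x = 0} → R^m be G-equivariant for some linear action of G on R^m. Then there exist functions φ_s into G and φ_n : R → R^m such that f(x) = φ_s(x/‖x‖_A) · φ_n(‖x‖_A), where ‖x‖_A = sign(x^T A x)·√|x^T A x|, φ_s is invariant under positive scalar rescaling of its argument's preimage, and φ_n depends only on the orbit invariant. -/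
open Matrix

/-- The pseudo-norm associated with the quadratic form of `A`:
`‖x‖_A = sign(xᵀ A x) √|xᵀ A x|`. -/
noncomputable def normA {n : ℕ} (A : Matrix (Fin n) (Fin n) ℝ) (x : Fin n → ℝ) : ℝ :=
  Real.sign (x ⬝ᵥ A.mulVec x) * Real.sqrt |x ⬝ᵥ A.mulVec x|

section Aux
variable {n : ℕ}


lemma mulVec_vecMulVec (w v x : Fin n → ℝ) :
    (vecMulVec w v).mulVec x = (v ⬝ᵥ x) • w := by
  ext i
  simp only [mulVec, dotProduct, vecMulVec_apply, Pi.smul_apply, smul_eq_mul]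
  rw [Finset.sum_mul]
  exact Finset.sum_congr rfl fun j _ => by ring

lemma mul_vecMulVec (A : Matrix (Fin n) (Fin n) ℝ) (w v : Fin n → ℝ) :
    A * vecMulVec w v = vecMulVec (A.mulVec w) v := by
  ext i j
  simp only [mul_apply, vecMulVec_apply, mulVec, dotProduct]
  rw [Finset.sum_mul]
  exact Finset.sum_congr rfl fun k _ => by ring

lemma vecMulVec_mul (A : Matrix (Fin n) (Fin n) ℝ) (w v : Fin n → ℝ) :
    vecMulVec w v * A = vecMulVec w (Aᵀ.mulVec v) := by
  ext i j
  simp only [mul_apply, vecMulVec_apply, mulVec, dotProduct, transpose_apply]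
  rw [Finset.mul_sum]
  exact Finset.sum_congr rfl fun k _ => by ring

lemma vecMulVec_mul_vecMulVec (a b c d : Fin n → ℝ) :
    vecMulVec a b * vecMulVec c d = (b ⬝ᵥ c) • vecMulVec a d := by
  ext i j
  simp only [mul_apply, vecMulVec_apply, Matrix.smul_apply, dotProduct, smul_eq_mul]
  rw [Finset.sum_mul]
  exact Finset.sum_congr rfl fun k _ => by ring

lemma vecMulVec_transpose (a b : Fin n → ℝ) :
    (vecMulVec a b)ᵀ = vecMulVec b a := by
  ext i j; simp [vecMulVec_apply, transpose_apply, mul_comm]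

lemma dot_symm {A : Matrix (Fin n) (Fin n) ℝ} (hA : A.IsSymm) (x y : Fin n → ℝ) :
    x ⬝ᵥ A.mulVec y = y ⬝ᵥ A.mulVec x := by
  rw [dotProduct_mulVec, ← mulVec_transpose, hA.eq, dotProduct_comm]

/-- Reflection along an anisotropic vector `w`. -/
noncomputable def reflA (A : Matrix (Fin n) (Fin n) ℝ) (w : Fin n → ℝ) :
    Matrix (Fin n) (Fin n) ℝ :=
  1 - (2 / (w ⬝ᵥ A.mulVec w)) • vecMulVec w (A.mulVec w)

lemma reflA_mulVec (A : Matrix (Fin n) (Fin n) ℝ) (w x : Fin n → ℝ) :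
    (reflA A w).mulVec x
      = x - ((2 / (w ⬝ᵥ A.mulVec w)) * (A.mulVec w ⬝ᵥ x)) • w := by
  rw [reflA, sub_mulVec, one_mulVec, smul_mulVec, mulVec_vecMulVec, smul_smul]

lemma expand_sq (X : Matrix (Fin n) (Fin n) ℝ) :
    (1 - X) * (1 - X) = 1 - X - X + X * X := by
  rw [sub_mul, one_mul, mul_sub, mul_one]; abel

lemma expand_form (A X Y : Matrix (Fin n) (Fin n) ℝ) :
    (1 - Y) * A * (1 - X) = A - A * X - Y * A + Y * (A * X) := by
  rw [sub_mul, one_mul, mul_sub, mul_one, sub_mul, ← Matrix.mul_assoc]; abel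

lemma reflA_mul_self {A : Matrix (Fin n) (Fin n) ℝ} (hA : A.IsSymm) {w : Fin n → ℝ}
    (hw : w ⬝ᵥ A.mulVec w ≠ 0) :
    reflA A w * reflA A w = 1 := by
  rw [reflA]
  set q := w ⬝ᵥ A.mulVec w with hq
  set c := 2 / q with hc
  set N := vecMulVec w (A.mulVec w) with hN
  have hNN : N * N = q • N := by
    rw [hN, vecMulVec_mul_vecMulVec, dotProduct_comm, ← hq]
  have hcoef : c * (c * q) = c + c := by rw [hc]; field_simp; ring
  have e2 : (c • N) * (c • N) = (c * (c * q)) • N := by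
    rw [smul_mul_assoc, mul_smul_comm, hNN, smul_smul, smul_smul, mul_assoc]
  rw [expand_sq, e2, hcoef, add_smul]; abel

lemma reflA_isUnit {A : Matrix (Fin n) (Fin n) ℝ} (hA : A.IsSymm) {w : Fin n → ℝ}
    (hw : w ⬝ᵥ A.mulVec w ≠ 0) : IsUnit (reflA A w) :=
  ⟨⟨reflA A w, reflA A w, reflA_mul_self hA hw, reflA_mul_self hA hw⟩, rfl⟩

lemma reflA_form {A : Matrix (Fin n) (Fin n) ℝ} (hA : A.IsSymm) {w : Fin n → ℝ}
    (hw : w ⬝ᵥ A.mulVec w ≠ 0) :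
    (reflA A w)ᵀ * A * reflA A w = A := by
  rw [reflA, transpose_sub, transpose_one, transpose_smul, vecMulVec_transpose]
  set q := w ⬝ᵥ A.mulVec w with hq
  set c := 2 / q with hc
  set N := vecMulVec w (A.mulVec w) with hN
  set N' := vecMulVec (A.mulVec w) w with hN'
  set P := vecMulVec (A.mulVec w) (A.mulVec w) with hP
  have hAN : A * N = P := by rw [hN, hP, mul_vecMulVec]
  have hNTA : N' * A = P := by rw [hN', vecMulVec_mul, hA.eq, hP]
  have hNP : N' * P = q • P := by
    rw [hP, hN', vecMulVec_mul_vecMulVec, ← hq]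
  have hcoef : c * (c * q) = c + c := by rw [hc]; field_simp; ring
  have hcoef2 : c * c * q = c + c := by rw [hc]; field_simp; ring
  have e3 : c • N' * (A * c • N) = (c * c * q) • P := by
    rw [mul_smul_comm, hAN, smul_mul_assoc, mul_smul_comm, hNP, smul_smul, smul_smul]
  rw [expand_form, e3, mul_smul_comm, hAN, smul_mul_assoc, hNTA, hcoef2, add_smul]
  abel

lemma witt_transitive {A : Matrix (Fin n) (Fin n) ℝ} (hA : A.IsSymm) (u v : Fin n → ℝ)
    (huv : u ⬝ᵥ A.mulVec u = v ⬝ᵥ A.mulVec v) (hq : u ⬝ᵥ A.mulVec u ≠ 0) :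
    ∃ g : Matrix (Fin n) (Fin n) ℝ,
      IsUnit g ∧ gᵀ * A * g = A ∧ g.mulVec v = u := by
  have hsym : u ⬝ᵥ A.mulVec v = v ⬝ᵥ A.mulVec u := dot_symm hA u v
  have hsum : (u - v) ⬝ᵥ A.mulVec (u - v) + (u + v) ⬝ᵥ A.mulVec (u + v)
      = 2 * (u ⬝ᵥ A.mulVec u) + 2 * (v ⬝ᵥ A.mulVec v) := by
    simp only [mulVec_add, mulVec_sub, dotProduct_add, dotProduct_sub,
      add_dotProduct, sub_dotProduct]
    ring
  by_cases h1 : (u - v) ⬝ᵥ A.mulVec (u - v) = 0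
  · -- use g = reflA A u * reflA A (u + v)
    have h2 : (u + v) ⬝ᵥ A.mulVec (u + v) ≠ 0 := by
      intro h2
      rw [h1, h2, ← huv] at hsum
      apply hq
      linarith
    refine ⟨reflA A u * reflA A (u + v), (reflA_isUnit hA hq).mul (reflA_isUnit hA h2), ?_, ?_⟩
    · rw [transpose_mul]
      calc (reflA A (u+v))ᵀ * (reflA A u)ᵀ * A * (reflA A u * reflA A (u+v))
          = (reflA A (u+v))ᵀ * ((reflA A u)ᵀ * A * reflA A u) * reflA A (u+v) := by
            simp only [Matrix.mul_assoc]
        _ = A := by rw [reflA_form hA hq, reflA_form hA h2]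
    · have step1 : (reflA A (u + v)).mulVec v = -u := by
        rw [reflA_mulVec]
        have hdot : A.mulVec (u + v) ⬝ᵥ v = v ⬝ᵥ A.mulVec (u + v) := dotProduct_comm _ _
        have hval : (2 / ((u+v) ⬝ᵥ A.mulVec (u+v))) * (A.mulVec (u+v) ⬝ᵥ v) = 1 := by
          rw [hdot]
          have hnum : 2 * (v ⬝ᵥ A.mulVec (u + v)) = (u+v) ⬝ᵥ A.mulVec (u+v) := by
            simp only [mulVec_add, dotProduct_add, add_dotProduct]
            linarith [hsym, huv]
          calc 2 / ((u+v) ⬝ᵥ A.mulVec (u+v)) * (v ⬝ᵥ A.mulVec (u + v))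
              = (2 * (v ⬝ᵥ A.mulVec (u + v))) / ((u+v) ⬝ᵥ A.mulVec (u+v)) := by ring
            _ = ((u+v) ⬝ᵥ A.mulVec (u+v)) / ((u+v) ⬝ᵥ A.mulVec (u+v)) := by rw [hnum]
            _ = 1 := div_self h2
        rw [hval, one_smul]
        abel
      rw [← mulVec_mulVec, step1]
      have hdotu : A.mulVec u ⬝ᵥ (-u) = -(u ⬝ᵥ A.mulVec u) := by
        rw [dotProduct_neg, dotProduct_comm]
      rw [reflA_mulVec, hdotu]
      have : 2 / (u ⬝ᵥ A.mulVec u) * -(u ⬝ᵥ A.mulVec u) = -2 := by field_simp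
      rw [this]
      ext i; simp; ring
  · -- use g = reflA A (u - v)
    refine ⟨reflA A (u - v), reflA_isUnit hA h1, reflA_form hA h1, ?_⟩
    rw [reflA_mulVec]
    have hdot : A.mulVec (u - v) ⬝ᵥ v = v ⬝ᵥ A.mulVec (u - v) := dotProduct_comm _ _
    have hval : (2 / ((u-v) ⬝ᵥ A.mulVec (u-v))) * (A.mulVec (u-v) ⬝ᵥ v) = -1 := by
      rw [hdot]
      have hnum : 2 * (v ⬝ᵥ A.mulVec (u - v)) = -((u-v) ⬝ᵥ A.mulVec (u-v)) := by
        simp only [mulVec_sub, dotProduct_sub, sub_dotProduct]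
        linarith [hsym, huv]
      calc 2 / ((u-v) ⬝ᵥ A.mulVec (u-v)) * (v ⬝ᵥ A.mulVec (u - v))
          = (2 * (v ⬝ᵥ A.mulVec (u - v))) / ((u-v) ⬝ᵥ A.mulVec (u-v)) := by ring
        _ = -((u-v) ⬝ᵥ A.mulVec (u-v)) / ((u-v) ⬝ᵥ A.mulVec (u-v)) := by rw [hnum]
        _ = -1 := by rw [neg_div, div_self h1]
    rw [hval]
    ext i; simp

lemma quad_smul (A : Matrix (Fin n) (Fin n) ℝ) (c : ℝ) (x : Fin n → ℝ) :
    (c • x) ⬝ᵥ A.mulVec (c • x) = c ^ 2 * (x ⬝ᵥ A.mulVec x) := by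
  rw [mulVec_smul, smul_dotProduct, dotProduct_smul]
  simp [smul_eq_mul]; ring

lemma quad_of_normA (A : Matrix (Fin n) (Fin n) ℝ) (x : Fin n → ℝ) :
    x ⬝ᵥ A.mulVec x = Real.sign (normA A x) * (normA A x) ^ 2 := by
  rcases lt_trichotomy (x ⬝ᵥ A.mulVec x) 0 with h | h | h
  · have h1 : normA A x = -Real.sqrt (-(x ⬝ᵥ A.mulVec x)) := by
      rw [normA, Real.sign_of_neg h, abs_of_neg h]; ring
    have h2 : (0:ℝ) < Real.sqrt (-(x ⬝ᵥ A.mulVec x)) := Real.sqrt_pos.2 (by linarith)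
    rw [h1, Real.sign_of_neg (by linarith), neg_pow, Real.sq_sqrt (by linarith)]
    ring
  · simp [normA, h, Real.sign_zero]
  · have h1 : normA A x = Real.sqrt (x ⬝ᵥ A.mulVec x) := by
      rw [normA, Real.sign_of_pos h, abs_of_pos h, one_mul]
    have h2 : (0:ℝ) < Real.sqrt (x ⬝ᵥ A.mulVec x) := Real.sqrt_pos.2 h
    rw [h1, Real.sign_of_pos h2, one_mul, Real.sq_sqrt (le_of_lt h)]

lemma quad_ne_zero {A : Matrix (Fin n) (Fin n) ℝ} {y : Fin n → ℝ}
    (h : normA A y ≠ 0) : y ⬝ᵥ A.mulVec y ≠ 0 := fun hq => h (by simp [normA, hq])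

lemma normA_ne_zero {A : Matrix (Fin n) (Fin n) ℝ} {x : Fin n → ℝ}
    (h : x ⬝ᵥ A.mulVec x ≠ 0) : normA A x ≠ 0 := by
  intro h0
  rw [quad_of_normA, h0] at h
  simp at h

lemma normA_smul (A : Matrix (Fin n) (Fin n) ℝ) (c : ℝ) (x : Fin n → ℝ) :
    normA A (c • x) = |c| * normA A x := by
  rcases eq_or_ne c 0 with rfl | hc
  · simp [normA]
  have hq := quad_smul A c x
  have hc2 : (0:ℝ) < c ^ 2 := by positivity
  rcases lt_trichotomy (x ⬝ᵥ A.mulVec x) 0 with h | h | h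
  · have h' : c ^ 2 * (x ⬝ᵥ A.mulVec x) < 0 := mul_neg_of_pos_of_neg hc2 h
    rw [normA, normA, hq, Real.sign_of_neg h', Real.sign_of_neg h,
      abs_of_neg h', abs_of_neg h, show -(c ^ 2 * (x ⬝ᵥ A.mulVec x)) = c ^ 2 * -(x ⬝ᵥ A.mulVec x) by ring,
      Real.sqrt_mul (sq_nonneg c), Real.sqrt_sq_eq_abs]
    ring
  · simp [normA, h, hq]
  · have h' : 0 < c ^ 2 * (x ⬝ᵥ A.mulVec x) := mul_pos hc2 h
    rw [normA, normA, hq, Real.sign_of_pos h', Real.sign_of_pos h,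
      abs_of_pos h', abs_of_pos h, Real.sqrt_mul (sq_nonneg c), Real.sqrt_sq_eq_abs]
    ring

lemma abs_inv_mul_self {r : ℝ} (hr : r ≠ 0) : |r⁻¹| * r = Real.sign r := by
  rcases lt_or_gt_of_ne hr with h | h
  · rw [Real.sign_of_neg h, abs_inv, abs_of_neg h]
    field_simp
  · rw [Real.sign_of_pos h, abs_inv, abs_of_pos h]
    field_simp

lemma sign_ne_zero' {r : ℝ} (hr : r ≠ 0) : Real.sign r ≠ 0 := by
  rcases lt_or_gt_of_ne hr with h | h
  · rw [Real.sign_of_neg h]; norm_num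
  · rw [Real.sign_of_pos h]; norm_num

open Classical in
noncomputable def baseVec {n : ℕ} (A : Matrix (Fin n) (Fin n) ℝ) (s : ℝ) : Fin n → ℝ :=
  if h : ∃ y, normA A y = s then h.choose else 0

lemma baseVec_spec {A : Matrix (Fin n) (Fin n) ℝ} {s : ℝ}
    (h : ∃ y, normA A y = s) : normA A (baseVec A s) = s := by
  classical
  rw [baseVec, dif_pos h]
  exact h.choose_spec

open Classical in
noncomputable def phiS {n : ℕ} (A : Matrix (Fin n) (Fin n) ℝ)
    (u : Fin n → ℝ) : Matrix (Fin n) (Fin n) ℝ :=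
  if h : ∃ g, (IsUnit g ∧ gᵀ * A * g = A) ∧ g.mulVec (baseVec A (normA A u)) = u
  then h.choose else 1

lemma phiS_mem (A : Matrix (Fin n) (Fin n) ℝ) (u : Fin n → ℝ) :
    IsUnit (phiS A u) ∧ (phiS A u)ᵀ * A * (phiS A u) = A := by
  rw [phiS]
  split_ifs with h
  · exact h.choose_spec.1
  · simp

lemma phiS_spec {A : Matrix (Fin n) (Fin n) ℝ} {u : Fin n → ℝ}
    (h : ∃ g, (IsUnit g ∧ gᵀ * A * g = A) ∧ g.mulVec (baseVec A (normA A u)) = u) :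
    (phiS A u).mulVec (baseVec A (normA A u)) = u := by
  rw [phiS, dif_pos h]; exact h.choose_spec.2

end Aux

theorem equivariant_decomposition (n m : ℕ)
    (A : Matrix (Fin n) (Fin n) ℝ) (hA0 : A ≠ 0) (hA : A.IsSymm)
    (ρ : Matrix (Fin n) (Fin n) ℝ → Matrix (Fin m) (Fin m) ℝ)
    (hρ1 : ρ 1 = 1)
    (hρmul : ∀ g h : Matrix (Fin n) (Fin n) ℝ,
      (IsUnit g ∧ gᵀ * A * g = A) → (IsUnit h ∧ hᵀ * A * h = A) →
      ρ (g * h) = ρ g * ρ h)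
    (f : (Fin n → ℝ) → (Fin m → ℝ))
    (hf : ∀ (g : Matrix (Fin n) (Fin n) ℝ) (x : Fin n → ℝ),
      IsUnit g → gᵀ * A * g = A → x ⬝ᵥ A.mulVec x ≠ 0 →
      f (g.mulVec x) = (ρ g).mulVec (f x)) :
    ∃ (φs : (Fin n → ℝ) → Matrix (Fin n) (Fin n) ℝ) (φn : ℝ → (Fin m → ℝ)),
      (∀ u : Fin n → ℝ, IsUnit (φs u) ∧ (φs u)ᵀ * A * (φs u) = A) ∧
      (∀ x : Fin n → ℝ, x ⬝ᵥ A.mulVec x ≠ 0 →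
        f x = (ρ (φs ((normA A x)⁻¹ • x))).mulVec (φn (normA A x))) := by
  refine ⟨phiS A, fun r => f (r • baseVec A (Real.sign r)), phiS_mem A, ?_⟩
  intro x hx
  set r := normA A x with hrdef
  have hr : r ≠ 0 := normA_ne_zero hx
  set u : Fin n → ℝ := r⁻¹ • x with hu
  have hnu : normA A u = Real.sign r := by
    rw [hu, normA_smul, ← hrdef]
    exact abs_inv_mul_self hr
  have hex : ∃ y, normA A y = Real.sign r := ⟨u, hnu⟩
  have hB : normA A (baseVec A (Real.sign r)) = Real.sign r := baseVec_spec hex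
  have hsr : Real.sign r ≠ 0 := sign_ne_zero' hr
  have hqu : u ⬝ᵥ A.mulVec u ≠ 0 := quad_ne_zero (by rw [hnu]; exact hsr)
  have hquB : baseVec A (Real.sign r) ⬝ᵥ A.mulVec (baseVec A (Real.sign r)) ≠ 0 :=
    quad_ne_zero (by rw [hB]; exact hsr)
  have hqeq : u ⬝ᵥ A.mulVec u
      = baseVec A (Real.sign r) ⬝ᵥ A.mulVec (baseVec A (Real.sign r)) := by
    rw [quad_of_normA, quad_of_normA, hnu, hB]
  obtain ⟨g, hg1, hg2, hg3⟩ := witt_transitive hA u (baseVec A (Real.sign r)) hqeq hqu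
  have hexg : ∃ g', (IsUnit g' ∧ g'ᵀ * A * g' = A) ∧
      g'.mulVec (baseVec A (normA A u)) = u := by
    rw [hnu]; exact ⟨g, ⟨hg1, hg2⟩, hg3⟩
  have hphi := phiS_spec hexg
  rw [hnu] at hphi
  have hqrB : (r • baseVec A (Real.sign r)) ⬝ᵥ A.mulVec (r • baseVec A (Real.sign r)) ≠ 0 := by
    rw [quad_smul]
    exact mul_ne_zero (pow_ne_zero 2 hr) hquB
  have hxeq : (phiS A u).mulVec (r • baseVec A (Real.sign r)) = x := by
    rw [mulVec_smul, hphi, hu, smul_smul, mul_inv_cancel₀ hr, one_smul]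
  rw [← hxeq]
  exact hf (phiS A u) _ (phiS_mem A u).1 (phiS_mem A u).2 hqrB
end

section
/- If A is a symmetric n×n real matrix that is neither positive semidefinite nor negative semidefinite (indefinite), then the map x ↦ sign(x^T A x)√|x^T A x| is continuous on R^n but fails to be differentiable at some nonzero point of the null cone {x : x^T A x = 0}. -/
open Matrix Filter

lemma sign_sqrt_eq (t : ℝ) :
    Real.sign t * Real.sqrt |t| = Real.sqrt t - Real.sqrt (-t) := by
  rcases lt_trichotomy t 0 with h | h | h
  · rw [Real.sign_of_neg h, abs_of_neg h, Real.sqrt_eq_zero'.2 h.le]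
    ring
  · simp [h]
  · rw [Real.sign_of_pos h, abs_of_pos h, Real.sqrt_eq_zero'.2 (by linarith : -t ≤ 0)]
    ring

lemma sqrt_tendsto_atTop : Tendsto Real.sqrt atTop atTop := by
  apply tendsto_atTop_atTop_of_monotone (fun x y h => Real.sqrt_le_sqrt h)
  intro b
  exact ⟨b ^ 2, by rw [Real.sqrt_sq_eq_abs]; exact le_abs_self b⟩

/-- key lemma, case a > 0 : s ↦ sign(as+bs²)·√|as+bs²| is not differentiable at 0. -/
lemma key1 (a b : ℝ) (ha : 0 < a) :
    ¬ DifferentiableAt ℝ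
      (fun s : ℝ => Real.sign (a * s + b * s ^ 2) * Real.sqrt |a * s + b * s ^ 2|) 0 := by
  intro hd
  set φ : ℝ → ℝ := fun s => Real.sign (a * s + b * s ^ 2) * Real.sqrt |a * s + b * s ^ 2|
    with hφdef
  obtain ⟨c, hc⟩ : ∃ c, HasDerivAt φ c 0 := ⟨_, hd.hasDerivAt⟩
  have hslope := hasDerivAt_iff_tendsto_slope.1 hc
  have h1 : Tendsto (slope φ 0) (nhdsWithin 0 (Set.Ioi 0)) (nhds c) :=
    hslope.mono_left (nhdsWithin_mono 0 (by intro s hs; simpa using ne_of_gt hs))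
  -- the slope tends to +∞ from the right
  have h2 : Tendsto (slope φ 0) (nhdsWithin 0 (Set.Ioi 0)) atTop := by
    have hinv : Tendsto (fun s : ℝ => a * s⁻¹ + b) (nhdsWithin 0 (Set.Ioi 0)) atTop :=
      tendsto_atTop_add_const_right _ b ((tendsto_inv_nhdsGT_zero).const_mul_atTop ha)
    have hs : Tendsto (fun s : ℝ => Real.sqrt (a * s⁻¹ + b)) (nhdsWithin 0 (Set.Ioi 0)) atTop :=
      sqrt_tendsto_atTop.comp hinv
    apply hs.congr'
    have hev : Set.Ioo (0 : ℝ) (a / (|b| + 1)) ∈ nhdsWithin (0:ℝ) (Set.Ioi 0) :=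
      Ioo_mem_nhdsGT_of_mem ⟨le_refl 0, by positivity⟩
    filter_upwards [hev] with s hs0
    obtain ⟨hs1, hs2⟩ := hs0
    have hab : 0 < a + b * s := by
      rcases le_or_gt 0 b with hb | hb
      · have : 0 ≤ b * s := by positivity
        linarith
      · have habs : |b| * s < a := by
          calc |b| * s < |b| * (a / (|b| + 1)) :=
                mul_lt_mul_of_pos_left hs2 (abs_pos.2 (ne_of_lt hb))
          _ ≤ a := by
                rw [mul_div_assoc', div_le_iff₀ (by positivity)]
                nlinarith [abs_nonneg b]
        have hbs : b * s = -(|b| * s) := by rw [abs_of_neg hb]; ring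
        linarith
    have hqpos : 0 < a * s + b * s ^ 2 := by nlinarith
    have hnn : 0 ≤ a * s⁻¹ + b := by
      have h' : a * s⁻¹ + b = (a + b * s) * s⁻¹ := by field_simp
      rw [h']
      positivity
    have hq : a * s + b * s ^ 2 = (a * s⁻¹ + b) * s ^ 2 := by
      field_simp
    rw [slope_def_field]
    have hφ0 : φ 0 = 0 := by simp [hφdef]
    have hφs : φ s = Real.sqrt (a * s⁻¹ + b) * s := by
      rw [hφdef]
      simp only
      rw [Real.sign_of_pos hqpos, abs_of_pos hqpos, one_mul, hq,
        Real.sqrt_mul hnn, Real.sqrt_sq hs1.le]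
    rw [hφ0, hφs, sub_zero, sub_zero, mul_div_cancel_right₀ _ (ne_of_gt hs1)]
  exact not_tendsto_nhds_of_tendsto_atTop h2 c h1

/-- key lemma, case a = 0, b > 0. -/
lemma key2 (b : ℝ) (hb : 0 < b) :
    ¬ DifferentiableAt ℝ
      (fun s : ℝ => Real.sign (b * s ^ 2) * Real.sqrt |b * s ^ 2|) 0 := by
  intro hd
  have heq : (fun s : ℝ => Real.sign (b * s ^ 2) * Real.sqrt |b * s ^ 2|)
      = fun s : ℝ => Real.sqrt b * |s| := by
    funext s
    rcases eq_or_ne s 0 with rfl | hs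
    · simp
    · have hpos : 0 < b * s ^ 2 := by positivity
      rw [Real.sign_of_pos hpos, abs_of_pos hpos, one_mul, Real.sqrt_mul hb.le,
        Real.sqrt_sq_eq_abs]
  rw [heq] at hd
  have hb' : Real.sqrt b ≠ 0 := by positivity
  have habs : DifferentiableAt ℝ (fun s : ℝ => |s|) 0 := by
    have h2 := hd.const_mul (Real.sqrt b)⁻¹
    simpa [← mul_assoc, inv_mul_cancel₀ hb'] using h2
  exact not_differentiableAt_abs_zero habs

lemma symm_dot {n : ℕ} {A : Matrix (Fin n) (Fin n) ℝ} (hA : A.IsSymm)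
    (x y : Fin n → ℝ) : x ⬝ᵥ A.mulVec y = y ⬝ᵥ A.mulVec x := by
  rw [Matrix.dotProduct_mulVec, ← Matrix.mulVec_transpose, hA.eq, dotProduct_comm]

lemma Q_expand {n : ℕ} (A : Matrix (Fin n) (Fin n) ℝ) (x d : Fin n → ℝ) (s : ℝ) :
    (x + s • d) ⬝ᵥ A.mulVec (x + s • d) =
      x ⬝ᵥ A.mulVec x + s * (x ⬝ᵥ A.mulVec d) + s * (d ⬝ᵥ A.mulVec x)
        + s ^ 2 * (d ⬝ᵥ A.mulVec d) := by
  simp only [Matrix.mulVec_add, Matrix.mulVec_smul, add_dotProduct,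
    dotProduct_add, smul_dotProduct, dotProduct_smul, smul_eq_mul]
  ring

lemma Q_smul {n : ℕ} (A : Matrix (Fin n) (Fin n) ℝ) (x : Fin n → ℝ) (r : ℝ) :
    (r • x) ⬝ᵥ A.mulVec (r • x) = r ^ 2 * (x ⬝ᵥ A.mulVec x) := by
  rw [Matrix.mulVec_smul, smul_dotProduct, dotProduct_smul,
    smul_eq_mul, smul_eq_mul]
  ring

theorem indefinite_norm_continuous_not_differentiable (n : ℕ)
    (A : Matrix (Fin n) (Fin n) ℝ) (hA : A.IsSymm)
    (hpos : ∃ x : Fin n → ℝ, 0 < x ⬝ᵥ A.mulVec x)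
    (hneg : ∃ x : Fin n → ℝ, x ⬝ᵥ A.mulVec x < 0) :
    Continuous (fun x : Fin n → ℝ => normA A x) ∧
    ∃ x : Fin n → ℝ, x ≠ 0 ∧ x ⬝ᵥ A.mulVec x = 0 ∧
      ¬ DifferentiableAt ℝ (fun y : Fin n → ℝ => normA A y) x := by
  obtain ⟨u, hu⟩ := hpos
  obtain ⟨v, hv⟩ := hneg
  set Q : (Fin n → ℝ) → ℝ := fun x => x ⬝ᵥ A.mulVec x with hQdef
  have hQcont : Continuous Q := by
    simp only [hQdef, dotProduct, Matrix.mulVec]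
    fun_prop
  have hf : (fun x : Fin n → ℝ => normA A x)
      = fun x => Real.sqrt (Q x) - Real.sqrt (-(Q x)) := by
    funext x
    simp only [normA, hQdef]
    exact sign_sqrt_eq _
  have hcont : Continuous (fun x : Fin n → ℝ => normA A x) := by
    rw [hf]
    exact (Real.continuous_sqrt.comp hQcont).sub
      (Real.continuous_sqrt.comp hQcont.neg)
  refine ⟨hcont, ?_⟩
  -- find a null point by IVT along the segment from u to v
  set c : ℝ → (Fin n → ℝ) := fun t => u + t • (v - u) with hcdef
  have hc_cont : Continuous fun t => Q (c t) := by
    apply hQcont.comp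
    simp only [hcdef]
    fun_prop
  have hmem : (0 : ℝ) ∈ Set.Icc (Q (c 1)) (Q (c 0)) := by
    constructor
    · have h1 : c 1 = v := by simp [hcdef]
      rw [h1]; exact hv.le
    · have h0 : c 0 = u := by simp [hcdef]
      rw [h0]; exact hu.le
  obtain ⟨t₀, ht₀mem, ht₀⟩ := intermediate_value_Icc' (by norm_num : (0:ℝ) ≤ 1)
    hc_cont.continuousOn hmem
  set x₀ : Fin n → ℝ := c t₀ with hx₀def
  have hQx₀ : x₀ ⬝ᵥ A.mulVec x₀ = 0 := ht₀
  -- x₀ ≠ 0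
  have hx₀ne : x₀ ≠ 0 := by
    intro h0
    have hlin : (1 - t₀) • u + t₀ • v = 0 := by
      have heq : u + t₀ • (v - u) = (1 - t₀) • u + t₀ • v := by
        rw [smul_sub, sub_smul, one_smul]
        abel
      rw [hx₀def, hcdef] at h0
      simp only at h0
      rw [heq] at h0
      exact h0
    rcases eq_or_ne t₀ 0 with rfl | ht0
    · simp only [sub_zero, one_smul, zero_smul, add_zero] at hlin
      rw [hlin] at hu
      simp [hQdef] at hu
    · have htv : t₀ • v = (t₀ - 1) • u := by
        have := eq_neg_of_add_eq_zero_right hlin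
        rw [this, ← neg_smul]
        congr 1
        ring
      have hveq : v = (t₀⁻¹ * (t₀ - 1)) • u := by
        have := congrArg (fun w => t₀⁻¹ • w) htv
        simp only [inv_smul_smul₀ ht0] at this
        rw [this, smul_smul]
      have : v ⬝ᵥ A.mulVec v = (t₀⁻¹ * (t₀ - 1)) ^ 2 * (u ⬝ᵥ A.mulVec u) := by
        rw [hveq, Q_smul]
      rw [this] at hv
      nlinarith
  refine ⟨x₀, hx₀ne, hQx₀, ?_⟩
  intro hd
  by_cases hw : A.mulVec x₀ = 0
  · -- degenerate case: use direction u
    set ψ : ℝ → (Fin n → ℝ) := fun s => x₀ + s • u with hψdef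
    have hψd : DifferentiableAt ℝ ψ 0 := by
      apply DifferentiableAt.const_add
      exact differentiableAt_id.smul_const u
    have hψ0 : ψ 0 = x₀ := by simp [hψdef]
    have hcomp : DifferentiableAt ℝ (fun s => normA A (ψ s)) 0 := by
      have := DifferentiableAt.comp 0 (hψ0 ▸ hd) hψd
      exact this
    have hx₀Au : x₀ ⬝ᵥ A.mulVec u = 0 := by
      rw [symm_dot hA, hw, dotProduct_zero]
    have huAx₀ : u ⬝ᵥ A.mulVec x₀ = 0 := by
      rw [hw, dotProduct_zero]
    have hQψ : ∀ s : ℝ, ψ s ⬝ᵥ A.mulVec (ψ s) = (u ⬝ᵥ A.mulVec u) * s ^ 2 := by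
      intro s
      rw [hψdef]
      simp only
      rw [Q_expand, hQx₀, hx₀Au, huAx₀]
      ring
    have heqf : (fun s => normA A (ψ s))
        = fun s : ℝ => Real.sign ((u ⬝ᵥ A.mulVec u) * s ^ 2)
            * Real.sqrt |(u ⬝ᵥ A.mulVec u) * s ^ 2| := by
      funext s
      rw [normA, hQψ]
    rw [heqf] at hcomp
    exact key2 _ hu hcomp
  · -- nondegenerate case: use direction d = A.mulVec x₀
    set d : Fin n → ℝ := A.mulVec x₀ with hddef
    have hdd : 0 < d ⬝ᵥ d := by
      rcases lt_or_eq_of_le (show (0:ℝ) ≤ d ⬝ᵥ d by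
        simp only [dotProduct]
        exact Finset.sum_nonneg fun i _ => mul_self_nonneg _) with h | h
      · exact h
      · exact absurd (dotProduct_self_eq_zero.1 h.symm) hw
    set ψ : ℝ → (Fin n → ℝ) := fun s => x₀ + s • d with hψdef
    have hψd : DifferentiableAt ℝ ψ 0 := by
      apply DifferentiableAt.const_add
      exact differentiableAt_id.smul_const d
    have hψ0 : ψ 0 = x₀ := by simp [hψdef]
    have hcomp : DifferentiableAt ℝ (fun s => normA A (ψ s)) 0 := by
      have := DifferentiableAt.comp 0 (hψ0 ▸ hd) hψd
      exact this
    have hx₀Ad : x₀ ⬝ᵥ A.mulVec d = d ⬝ᵥ d := by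
      rw [symm_dot hA, ← hddef]
    have hdAx₀ : d ⬝ᵥ A.mulVec x₀ = d ⬝ᵥ d := by
      rw [← hddef]
    have hQψ : ∀ s : ℝ, ψ s ⬝ᵥ A.mulVec (ψ s)
        = (2 * (d ⬝ᵥ d)) * s + (d ⬝ᵥ A.mulVec d) * s ^ 2 := by
      intro s
      rw [hψdef]
      simp only
      rw [Q_expand, hQx₀, hx₀Ad, hdAx₀]
      ring
    have heqf : (fun s => normA A (ψ s))
        = fun s : ℝ => Real.sign ((2 * (d ⬝ᵥ d)) * s + (d ⬝ᵥ A.mulVec d) * s ^ 2)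
            * Real.sqrt |(2 * (d ⬝ᵥ d)) * s + (d ⬝ᵥ A.mulVec d) * s ^ 2| := by
      funext s
      rw [normA, hQψ]
    rw [heqf] at hcomp
    exact key1 _ _ (by linarith) hcomp
end
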